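/- Let $X$ be a Banach space, $1 \le p < t < r < \infty$, and $k \in \mathbb{Z}$. For the dyadic averaging operator $E_k$, there is a constant $C$ depending only on $n, r, t$ such that $\|E_k(f)\|_{M_p^{t,r}(X)} \le C \|f\|_{M_p^{t,r}(X)}$ for every $f \in M_p^{t,r}(X)$. -/

import Mathlib

open MeasureTheory Filter ENNReal

noncomputable section

/-- The dyadic cube `Q_{j,m} = ∏ᵢ [2^{-j} mᵢ, 2^{-j}(mᵢ+1))` in `ℝⁿ`. -/
def dyadicCube (n : ℕ) (j : ℤ) (m : Fin n → ℤ) : Set (Fin n → ℝ) :=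
  {x | ∀ i, (2:ℝ) ^ (-(j:ℝ)) * m i ≤ x i ∧ x i < (2:ℝ) ^ (-(j:ℝ)) * (m i + 1)}

/-- The volume `2^{-jn}` of a dyadic cube of generation `j`, as an extended nonnegative real. -/
def cubeVol (n : ℕ) (j : ℤ) : ℝ≥0∞ := (2:ℝ≥0∞) ^ (-((j:ℝ) * n))

/-- The `ℓ^r` norm of an `ℝ≥0∞`-valued family, `r ∈ (0,∞]`. -/
def lrNorm {ι : Type*} (r : ℝ≥0∞) (a : ι → ℝ≥0∞) : ℝ≥0∞ :=
  if r = ∞ then ⨆ i, a i else (∑' i, a i ^ r.toReal) ^ (1 / r.toReal)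

/-- The Bourgain–Morrey norm of an `X`-valued function on `ℝⁿ`. -/
def BMnorm (n : ℕ) (p t : ℝ) (r : ℝ≥0∞) {X : Type*} [NormedAddCommGroup X]
    (f : (Fin n → ℝ) → X) : ℝ≥0∞ :=
  lrNorm r fun jm : ℤ × (Fin n → ℤ) =>
    cubeVol n jm.1 ^ (1/t - 1/p) *
      (∫⁻ x in dyadicCube n jm.1 jm.2, (‖f x‖₊ : ℝ≥0∞) ^ p) ^ (1/p)

/-- Membership in the Bourgain–Morrey space `M_p^{t,r}(X)`. -/
def MemBM (n : ℕ) (p t : ℝ) (r : ℝ≥0∞) {X : Type*} [NormedAddCommGroup X]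
    (f : (Fin n → ℝ) → X) : Prop :=
  AEStronglyMeasurable f volume ∧ BMnorm n p t r f < ∞

/-- The conjugate exponent `a' = a/(a-1)`. -/
def conj (a : ℝ) : ℝ := a / (a - 1)

/-- The conjugate exponent of `r ∈ (1,∞]`, with `∞' = 1`. -/
def conjE (r : ℝ≥0∞) : ℝ := if r = ∞ then 1 else conj r.toReal

/-- A `(p',t',Y)`-block supported on the dyadic cube `Q_{j,k}`. -/
def IsBlock (n : ℕ) (p t : ℝ) (j : ℤ) (k : Fin n → ℤ) {Y : Type*} [NormedAddCommGroup Y]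
    (b : (Fin n → ℝ) → Y) : Prop :=
  AEStronglyMeasurable b volume ∧ (∀ x, x ∉ dyadicCube n j k → b x = 0) ∧
    (∫⁻ x, (‖b x‖₊ : ℝ≥0∞) ^ conj p) ^ (1 / conj p) ≤ cubeVol n j ^ (1/t - 1/p)

/-- A representation of `f` as an a.e. convergent sum of blocks with coefficients `lam`. -/
def IsBlockRep (n : ℕ) (p t : ℝ) {Y : Type*} [NormedAddCommGroup Y] [NormedSpace ℝ Y]
    (f : (Fin n → ℝ) → Y) (lam : ℤ × (Fin n → ℤ) → ℝ)
    (b : ℤ × (Fin n → ℤ) → (Fin n → ℝ) → Y) : Prop :=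
  (∀ jk : ℤ × (Fin n → ℤ), IsBlock n p t jk.1 jk.2 (b jk)) ∧
    ∀ᵐ x : Fin n → ℝ ∂volume, HasSum (fun jk => lam jk • b jk x) (f x)

/-- The norm of the block space `𝓗_{p'}^{t',r'}(Y)` (parametrized by `p`, `t` and `r'`). -/
def blockNorm (n : ℕ) (p t r' : ℝ) {Y : Type*} [NormedAddCommGroup Y] [NormedSpace ℝ Y]
    (f : (Fin n → ℝ) → Y) : ℝ≥0∞ :=
  ⨅ (lam : ℤ × (Fin n → ℤ) → ℝ) (b : ℤ × (Fin n → ℤ) → (Fin n → ℝ) → Y)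
    (_ : IsBlockRep n p t f lam b),
    (∑' jk : ℤ × (Fin n → ℤ), ENNReal.ofReal |lam jk| ^ r') ^ (1 / r')

/-- Membership in the block space `𝓗_{p'}^{t',r'}(Y)`. -/
def MemBlock (n : ℕ) (p t r' : ℝ) {Y : Type*} [NormedAddCommGroup Y] [NormedSpace ℝ Y]
    (f : (Fin n → ℝ) → Y) : Prop := blockNorm n p t r' f < ∞

/-- The dyadic averaging operator `E_k` at generation `k`. -/
def Ek (n : ℕ) {X : Type*} [NormedAddCommGroup X] [NormedSpace ℝ X]
    (k : ℤ) (f : (Fin n → ℝ) → X) (x : Fin n → ℝ) : X :=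
  ((2:ℝ) ^ ((k:ℝ) * n)) • ∫ y in dyadicCube n k fun i => ⌊(2:ℝ) ^ (k:ℝ) * x i⌋, f y


-- basic floor lemma
lemma floor_div_nat' (a : ℝ) (N : ℕ) (hN : 0 < N) : ⌊a / (N:ℝ)⌋ = ⌊a⌋ / (N:ℤ) := by
  have hN' : (0:ℝ) < N := by exact_mod_cast hN
  rw [Int.floor_eq_iff]
  constructor
  · rw [le_div_iff₀ hN']
    have h1 : ((⌊a⌋ / (N:ℤ)) * N : ℤ) ≤ ⌊a⌋ := Int.ediv_mul_le ⌊a⌋ (by positivity)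
    calc ((⌊a⌋ / (N:ℤ) : ℤ) : ℝ) * N = (((⌊a⌋ / (N:ℤ)) * N : ℤ) : ℝ) := by push_cast; ring
      _ ≤ (⌊a⌋ : ℝ) := by exact_mod_cast h1
      _ ≤ a := Int.floor_le a
  · rw [div_lt_iff₀ hN']
    have h2 : ⌊a⌋ < (⌊a⌋ / (N:ℤ) + 1) * N := Int.lt_ediv_add_one_mul_self ⌊a⌋ (by positivity)
    calc a < (⌊a⌋ : ℝ) + 1 := Int.lt_floor_add_one a
      _ ≤ (((⌊a⌋ / (N:ℤ) + 1) * N : ℤ) : ℝ) := by exact_mod_cast h2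
      _ = ((⌊a⌋ / (N:ℤ) : ℤ) + 1) * (N:ℝ) := by push_cast; ring

lemma mem_dyadicCube_iff {n : ℕ} {j : ℤ} {m : Fin n → ℤ} {x : Fin n → ℝ} :
    x ∈ dyadicCube n j m ↔ ∀ i, ⌊(2:ℝ) ^ (j:ℝ) * x i⌋ = m i := by
  have h2 : (0:ℝ) < (2:ℝ) ^ (j:ℝ) := Real.rpow_pos_of_pos two_pos _
  have hneg : (2:ℝ) ^ (-(j:ℝ)) = ((2:ℝ) ^ (j:ℝ))⁻¹ := Real.rpow_neg (by norm_num) _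
  constructor
  · intro hx i
    obtain ⟨h1', h2'⟩ := hx i
    rw [hneg] at h1' h2'
    rw [Int.floor_eq_iff]
    constructor
    · calc ((m i : ℝ)) = (2:ℝ)^(j:ℝ) * (((2:ℝ)^(j:ℝ))⁻¹ * m i) := by field_simp
        _ ≤ (2:ℝ)^(j:ℝ) * x i := by nlinarith
    · calc (2:ℝ)^(j:ℝ) * x i < (2:ℝ)^(j:ℝ) * (((2:ℝ)^(j:ℝ))⁻¹ * (m i + 1)) := by nlinarith
        _ = m i + 1 := by field_simp
  · intro h i
    have := Int.floor_eq_iff.mp (h i)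
    obtain ⟨h1', h2'⟩ := this
    rw [hneg]
    constructor
    · rw [inv_mul_le_iff₀ h2]; linarith [h1']
    · rw [lt_inv_mul_iff₀ h2]; push_cast; linarith [h2']

example : True := trivial

-- floor at coarser scale: j ≤ k
lemma floor_scale {j k : ℤ} (hjk : j ≤ k) (y : ℝ) :
    ⌊(2:ℝ) ^ (j:ℝ) * y⌋ = ⌊(2:ℝ) ^ (k:ℝ) * y⌋ / (2 ^ (k - j).toNat : ℤ) := by
  have hd : ((k - j).toNat : ℤ) = k - j := Int.toNat_of_nonneg (by omega)
  have key : (2:ℝ) ^ (j:ℝ) * y = ((2:ℝ) ^ (k:ℝ) * y) / ((2 ^ (k - j).toNat : ℕ) : ℝ) := by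
    have h1 : ((2 ^ (k - j).toNat : ℕ) : ℝ) = (2:ℝ) ^ (((k - j).toNat : ℝ)) := by
      rw [Real.rpow_natCast]; push_cast; ring
    have h2 : (((k - j).toNat : ℝ)) = (k:ℝ) - (j:ℝ) := by
      exact_mod_cast congrArg (Int.cast : ℤ → ℝ) hd
    rw [h1, h2, _root_.eq_div_iff (by positivity), mul_comm ((2:ℝ)^(j:ℝ)) y, mul_assoc,
      ← Real.rpow_add (by norm_num)]
    ring_nf
  rw [key, floor_div_nat' _ _ (by positivity)]
  congr 1

lemma measurableSet_dyadicCube {n : ℕ} {j : ℤ} {m : Fin n → ℤ} :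
    MeasurableSet (dyadicCube n j m) := by
  have : dyadicCube n j m = Set.pi Set.univ
      (fun i => Set.Ico ((2:ℝ) ^ (-(j:ℝ)) * m i) ((2:ℝ) ^ (-(j:ℝ)) * (m i + 1))) := by
    ext x; simp [dyadicCube, Set.mem_pi, Set.mem_Ico]
  rw [this]
  exact MeasurableSet.univ_pi fun i => measurableSet_Ico

lemma volume_dyadicCube {n : ℕ} {j : ℤ} {m : Fin n → ℤ} :
    volume (dyadicCube n j m) = cubeVol n j := by
  have : dyadicCube n j m = Set.pi Set.univ
      (fun i => Set.Ico ((2:ℝ) ^ (-(j:ℝ)) * m i) ((2:ℝ) ^ (-(j:ℝ)) * (m i + 1))) := by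
    ext x; simp [dyadicCube, Set.mem_pi, Set.mem_Ico]
  rw [this, volume_pi_pi]
  have hline : ∀ i : Fin n, volume (Set.Ico ((2:ℝ) ^ (-(j:ℝ)) * m i) ((2:ℝ) ^ (-(j:ℝ)) * (m i + 1)))
      = ENNReal.ofReal ((2:ℝ) ^ (-(j:ℝ))) := by
    intro i
    rw [Real.volume_Ico]
    congr 1
    ring
  simp only [hline, Finset.prod_const, Finset.card_univ, Fintype.card_fin]
  rw [← ENNReal.ofReal_rpow_of_pos (by norm_num), ENNReal.ofReal_ofNat]
  rw [← ENNReal.rpow_natCast ((2:ℝ≥0∞) ^ (-(j:ℝ))) n, ← ENNReal.rpow_mul]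
  rw [cubeVol]
  ring_nf

lemma cubeVol_pos {n : ℕ} {j : ℤ} : 0 < cubeVol n j := by
  rw [cubeVol]
  exact ENNReal.rpow_pos (by norm_num) (by norm_num)

lemma cubeVol_ne_top {n : ℕ} {j : ℤ} : cubeVol n j ≠ ∞ := by
  rw [cubeVol]
  simp [ENNReal.rpow_eq_top_iff]

lemma two_rpow_add (a b : ℝ) : (2:ℝ≥0∞) ^ (a + b) = 2 ^ a * 2 ^ b :=
  ENNReal.rpow_add a b (by norm_num) (by norm_num)

lemma two_rpow_ne_top (a : ℝ) : (2:ℝ≥0∞) ^ a ≠ ∞ := by simp [ENNReal.rpow_eq_top_iff]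

lemma two_rpow_ne_zero (a : ℝ) : (2:ℝ≥0∞) ^ a ≠ 0 := by
  simp [ENNReal.rpow_eq_zero_iff]

lemma cubeVol_rpow (n : ℕ) (j : ℤ) (s : ℝ) :
    cubeVol n j ^ s = (2:ℝ≥0∞) ^ (-((j:ℝ) * n) * s) := by
  rw [cubeVol, ← ENNReal.rpow_mul]

lemma dyadicCube_nonempty (n : ℕ) (j : ℤ) (m : Fin n → ℤ) : (dyadicCube n j m).Nonempty := by
  refine ⟨fun i => (2:ℝ) ^ (-(j:ℝ)) * m i, fun i => ⟨le_refl _, ?_⟩⟩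
  have h : (0:ℝ) < (2:ℝ) ^ (-(j:ℝ)) := Real.rpow_pos_of_pos two_pos _
  simp only []
  nlinarith [h]

-- constancy of ⌊2^k x⌋ on cubes of generation j ≥ k
lemma floor_const_on_cube {n : ℕ} {j k : ℤ} (hkj : k ≤ j) {m : Fin n → ℤ} {x : Fin n → ℝ}
    (hx : x ∈ dyadicCube n j m) :
    (fun i => ⌊(2:ℝ) ^ (k:ℝ) * x i⌋) = fun i => m i / (2 ^ (j - k).toNat : ℤ) := by
  funext i
  rw [floor_scale hkj (x i), mem_dyadicCube_iff.mp hx i]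

-- nesting: same gen-k cube, and x in a gen-j cube with j ≤ k implies y in it too
lemma nested_cube {n : ℕ} {j k : ℤ} (hjk : j ≤ k) {m : Fin n → ℤ} {x y : Fin n → ℝ}
    (hfl : ∀ i, ⌊(2:ℝ) ^ (k:ℝ) * x i⌋ = ⌊(2:ℝ) ^ (k:ℝ) * y i⌋)
    (hx : x ∈ dyadicCube n j m) : y ∈ dyadicCube n j m := by
  rw [mem_dyadicCube_iff] at hx ⊢
  intro i
  rw [floor_scale hjk (y i), ← hfl i, ← floor_scale hjk (x i), hx i]

-- Hölder: (∫ g)^p ≤ (μ s)^(p-1) * ∫ g^p on a set of finite measure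
lemma lintegral_rpow_holder {α : Type*} [MeasurableSpace α] (μ : Measure α)
    {g : α → ℝ≥0∞} (hg : AEMeasurable g μ) {p : ℝ} (hp : 1 ≤ p) (hμ : μ Set.univ ≠ ∞) :
    (∫⁻ a, g a ∂μ) ^ p ≤ (μ Set.univ) ^ (p - 1) * ∫⁻ a, g a ^ p ∂μ := by
  rcases eq_or_lt_of_le hp with hp1 | hp1
  · subst hp1
    simp
  have hp0 : p ≠ 0 := by linarith
  have hq : Real.HolderConjugate p (p / (p - 1)) := Real.HolderConjugate.conjExponent hp1
  have h := ENNReal.lintegral_mul_le_Lp_mul_Lq μ hq hg aemeasurable_const (g := fun _ => 1)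
  simp only [Pi.mul_apply, mul_one, ENNReal.one_rpow, lintegral_const, one_mul] at h
  have h2 : (∫⁻ a, g a ∂μ) ^ p ≤ (((∫⁻ a, g a ^ p ∂μ) ^ (1/p)) * (μ Set.univ) ^ ((p-1)/p)) ^ p := by
    apply ENNReal.rpow_le_rpow _ (by linarith)
    calc (∫⁻ a, g a ∂μ) ≤ (∫⁻ a, g a ^ p ∂μ) ^ (1/p) * μ Set.univ ^ (1 / (p / (p-1))) := h
      _ = (∫⁻ a, g a ^ p ∂μ) ^ (1/p) * μ Set.univ ^ ((p-1)/p) := by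
          rw [one_div_div]
  calc (∫⁻ a, g a ∂μ) ^ p
      ≤ (((∫⁻ a, g a ^ p ∂μ) ^ (1/p)) * (μ Set.univ) ^ ((p-1)/p)) ^ p := h2
    _ = (μ Set.univ) ^ (p - 1) * ∫⁻ a, g a ^ p ∂μ := by
        rw [ENNReal.mul_rpow_of_nonneg _ _ (by linarith), ← ENNReal.rpow_mul, ← ENNReal.rpow_mul]
        rw [one_div_mul_cancel hp0, div_mul_cancel₀ _ hp0, ENNReal.rpow_one]
        ring

lemma cubeVol_inv (n : ℕ) (k : ℤ) : (cubeVol n k)⁻¹ = (2:ℝ≥0∞) ^ ((k:ℝ) * n) := by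
  rw [cubeVol, ENNReal.rpow_neg, inv_inv]

def Ek' (n : ℕ) {X : Type*} [NormedAddCommGroup X] [NormedSpace ℝ X]
    (k : ℤ) (f : (Fin n → ℝ) → X) (x : Fin n → ℝ) : X :=
  ((2:ℝ) ^ ((k:ℝ) * n)) • ∫ y in dyadicCube n k fun i => ⌊(2:ℝ) ^ (k:ℝ) * x i⌋, f y

lemma Ek'_pointwise {n : ℕ} {X : Type*} [NormedAddCommGroup X] [NormedSpace ℝ X]
    {k : ℤ} {f : (Fin n → ℝ) → X} (hf : AEStronglyMeasurable f volume)
    {p : ℝ} (hp : 1 ≤ p) (x : Fin n → ℝ) :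
    (‖Ek' n k f x‖₊ : ℝ≥0∞) ^ p ≤
      (cubeVol n k)⁻¹ *
        ∫⁻ y in dyadicCube n k (fun i => ⌊(2:ℝ) ^ (k:ℝ) * x i⌋), (‖f y‖₊ : ℝ≥0∞) ^ p := by
  set Q := dyadicCube n k (fun i => ⌊(2:ℝ) ^ (k:ℝ) * x i⌋) with hQ
  have hscal : (‖(2:ℝ) ^ ((k:ℝ) * n)‖₊ : ℝ≥0∞) = (2:ℝ≥0∞) ^ ((k:ℝ) * n) := by
    change ‖(2:ℝ) ^ ((k:ℝ) * n)‖ₑ = _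
    rw [← ofReal_norm, Real.norm_of_nonneg (by positivity),
      ← ENNReal.ofReal_rpow_of_pos (by norm_num), ENNReal.ofReal_ofNat]
  have h1 : (‖Ek' n k f x‖₊ : ℝ≥0∞) ≤ (2:ℝ≥0∞) ^ ((k:ℝ) * n) * ∫⁻ y in Q, (‖f y‖₊ : ℝ≥0∞) ∂volume := by
    rw [Ek', nnnorm_smul, ENNReal.coe_mul, hscal]
    exact mul_le_mul_right (enorm_integral_le_lintegral_enorm _) _
  have h2 : (∫⁻ y in Q, (‖f y‖₊ : ℝ≥0∞) ∂volume) ^ p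
      ≤ (cubeVol n k) ^ (p - 1) * ∫⁻ y in Q, (‖f y‖₊ : ℝ≥0∞) ^ p ∂volume := by
    have := lintegral_rpow_holder (volume.restrict Q) (g := fun y => (‖f y‖₊ : ℝ≥0∞)) (hf.enorm.restrict) hp
      (by rw [Measure.restrict_apply_univ, hQ, volume_dyadicCube]; exact cubeVol_ne_top)
    rwa [Measure.restrict_apply_univ, hQ, volume_dyadicCube] at this
  calc (‖Ek' n k f x‖₊ : ℝ≥0∞) ^ p
      ≤ ((2:ℝ≥0∞) ^ ((k:ℝ) * n) * ∫⁻ y in Q, (‖f y‖₊ : ℝ≥0∞) ∂volume) ^ p :=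
        ENNReal.rpow_le_rpow h1 (by linarith)
    _ = ((2:ℝ≥0∞) ^ ((k:ℝ) * n)) ^ p * (∫⁻ y in Q, (‖f y‖₊ : ℝ≥0∞) ∂volume) ^ p := by
        rw [ENNReal.mul_rpow_of_nonneg _ _ (by linarith)]
    _ ≤ ((2:ℝ≥0∞) ^ ((k:ℝ) * n)) ^ p * ((cubeVol n k) ^ (p - 1) * ∫⁻ y in Q, (‖f y‖₊ : ℝ≥0∞) ^ p ∂volume) :=
        mul_le_mul_right h2 _
    _ = (cubeVol n k)⁻¹ * ∫⁻ y in Q, (‖f y‖₊ : ℝ≥0∞) ^ p ∂volume := by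
        rw [cubeVol, ← ENNReal.rpow_mul, ← ENNReal.rpow_mul, ← mul_assoc, ← two_rpow_add,
          ENNReal.rpow_neg, inv_inv]
        congr 2
        ring

lemma caseA {n : ℕ} {k j : ℤ} (hjk : j ≤ k) (m : Fin n → ℤ)
    {F : (Fin n → ℝ) → ℝ≥0∞} (hF : Measurable F) :
    (∫⁻ x in dyadicCube n j m,
      (cubeVol n k)⁻¹ * ∫⁻ y in dyadicCube n k (fun i => ⌊(2:ℝ) ^ (k:ℝ) * x i⌋), F y)
      ≤ ∫⁻ x in dyadicCube n j m, F x := by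
  classical
  set Q := dyadicCube n j m with hQdef
  set D : Set ((Fin n → ℝ) × (Fin n → ℝ)) :=
    ⋃ m' : Fin n → ℤ, (dyadicCube n k m') ×ˢ (dyadicCube n k m') with hD
  have hDmem : ∀ x y : Fin n → ℝ,
      ((x, y) ∈ D ↔ ∀ i, ⌊(2:ℝ) ^ (k:ℝ) * x i⌋ = ⌊(2:ℝ) ^ (k:ℝ) * y i⌋) := by
    intro x y
    simp only [hD, Set.mem_iUnion, Set.mem_prod]
    constructor
    · rintro ⟨m', hx, hy⟩ i
      rw [mem_dyadicCube_iff] at hx hy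
      rw [hx i, hy i]
    · intro h
      refine ⟨fun i => ⌊(2:ℝ) ^ (k:ℝ) * x i⌋, mem_dyadicCube_iff.mpr fun i => rfl,
        mem_dyadicCube_iff.mpr fun i => (h i).symm⟩
  have hDmeas : MeasurableSet D :=
    MeasurableSet.iUnion fun m' => measurableSet_dyadicCube.prod measurableSet_dyadicCube
  have hQk : ∀ x y : Fin n → ℝ,
      (y ∈ dyadicCube n k (fun i => ⌊(2:ℝ) ^ (k:ℝ) * x i⌋) ↔ (x, y) ∈ D) := by
    intro x y
    rw [mem_dyadicCube_iff, hDmem]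
    exact ⟨fun h i => (h i).symm, fun h i => (h i).symm⟩
  set H : ((Fin n → ℝ) × (Fin n → ℝ)) → ℝ≥0∞ := D.indicator (fun z => F z.2) with hH
  have hHmeas : Measurable H := (hF.comp measurable_snd).indicator hDmeas
  have step1 : ∀ x : Fin n → ℝ,
      (∫⁻ y in dyadicCube n k (fun i => ⌊(2:ℝ) ^ (k:ℝ) * x i⌋), F y) = ∫⁻ y, H (x, y) := by
    intro x
    rw [← lintegral_indicator measurableSet_dyadicCube]
    congr 1
    funext y
    by_cases hy : y ∈ dyadicCube n k (fun i => ⌊(2:ℝ) ^ (k:ℝ) * x i⌋)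
    · rw [Set.indicator_of_mem hy, hH, Set.indicator_of_mem ((hQk x y).mp hy)]
    · rw [Set.indicator_of_notMem hy, hH,
        Set.indicator_of_notMem (fun h => hy ((hQk x y).mpr h))]
  have hVne0 : cubeVol n k ≠ 0 := cubeVol_pos.ne'
  have hVnetop : cubeVol n k ≠ ∞ := cubeVol_ne_top
  have hVinv_ne_top : (cubeVol n k)⁻¹ ≠ ∞ := by simp [hVne0]
  calc (∫⁻ x in Q, (cubeVol n k)⁻¹ * ∫⁻ y in dyadicCube n k (fun i => ⌊(2:ℝ) ^ (k:ℝ) * x i⌋), F y)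
      = (cubeVol n k)⁻¹ * ∫⁻ x in Q, ∫⁻ y, H (x, y) := by
        rw [← lintegral_const_mul' _ _ hVinv_ne_top]
        congr 1; funext x; rw [step1 x]
    _ = (cubeVol n k)⁻¹ * ∫⁻ y, ∫⁻ x in Q, H (x, y) := by
        congr 1
        exact lintegral_lintegral_swap hHmeas.aemeasurable
    _ = (cubeVol n k)⁻¹ * ∫⁻ y, F y * volume (dyadicCube n k (fun i => ⌊(2:ℝ) ^ (k:ℝ) * y i⌋) ∩ Q) := by
        congr 1
        apply lintegral_congr
        intro y
        have : (fun x => H (x, y))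
            = (dyadicCube n k (fun i => ⌊(2:ℝ) ^ (k:ℝ) * y i⌋)).indicator (fun _ => F y) := by
          funext x
          by_cases hx : x ∈ dyadicCube n k (fun i => ⌊(2:ℝ) ^ (k:ℝ) * y i⌋)
          · have hxD : (x, y) ∈ D := by
              rw [hDmem]
              intro i
              exact mem_dyadicCube_iff.mp hx i
            rw [Set.indicator_of_mem hx, hH, Set.indicator_of_mem hxD]
          · have hxD : (x, y) ∉ D := by
              rw [hDmem]
              intro h
              exact hx (mem_dyadicCube_iff.mpr h)
            rw [Set.indicator_of_notMem hx, hH, Set.indicator_of_notMem hxD]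
        rw [this, lintegral_indicator_const measurableSet_dyadicCube,
          Measure.restrict_apply measurableSet_dyadicCube]
    _ ≤ (cubeVol n k)⁻¹ * ∫⁻ y, Q.indicator (fun y => cubeVol n k * F y) y := by
        apply mul_le_mul_right
        apply lintegral_mono
        intro y
        by_cases hy : y ∈ Q
        · rw [Set.indicator_of_mem hy]
          rw [mul_comm]
          apply mul_le_mul_right
          calc volume (dyadicCube n k (fun i => ⌊(2:ℝ) ^ (k:ℝ) * y i⌋) ∩ Q)
              ≤ volume (dyadicCube n k (fun i => ⌊(2:ℝ) ^ (k:ℝ) * y i⌋)) :=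
                measure_mono Set.inter_subset_left
            _ = cubeVol n k := volume_dyadicCube
        · rw [Set.indicator_of_notMem hy]
          have hempty : dyadicCube n k (fun i => ⌊(2:ℝ) ^ (k:ℝ) * y i⌋) ∩ Q = ∅ := by
            rw [Set.eq_empty_iff_forall_notMem]
            rintro z ⟨hz1, hz2⟩
            exact hy (nested_cube hjk (mem_dyadicCube_iff.mp hz1) hz2)
          simp only [hempty, measure_empty, mul_zero, le_refl]
    _ = (cubeVol n k)⁻¹ * (cubeVol n k * ∫⁻ y in Q, F y) := by
        rw [lintegral_indicator (hQdef ▸ measurableSet_dyadicCube),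
          lintegral_const_mul' _ _ hVnetop]
    _ = ∫⁻ y in Q, F y := by
        rw [← mul_assoc, ENNReal.inv_mul_cancel hVne0 hVnetop, one_mul]

def divModEquiv (n d : ℕ) : (Fin n → ℤ) ≃ ((Fin n → ℤ) × (Fin n → Fin (2 ^ d))) where
  toFun m := (fun i => m i / (2 ^ d : ℤ),
    fun i => ⟨(m i % (2 ^ d : ℤ)).toNat, by
      have h1 : (0:ℤ) < 2 ^ d := by positivity
      have h2 : m i % (2 ^ d : ℤ) < 2 ^ d := Int.emod_lt_of_pos _ h1
      have h3 : 0 ≤ m i % (2 ^ d : ℤ) := Int.emod_nonneg _ (by positivity)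
      have h4 : ((2 ^ d : ℕ) : ℤ) = (2:ℤ) ^ d := by push_cast; ring
      omega⟩)
  invFun qs := fun i => (2 ^ d : ℤ) * qs.1 i + (qs.2 i : ℤ)
  left_inv m := by
    funext i
    simp only []
    rw [Int.toNat_of_nonneg (Int.emod_nonneg _ (by positivity))]
    exact Int.mul_ediv_add_emod (m i) (2 ^ d : ℤ)
  right_inv qs := by
    have h1 : (0:ℤ) < 2 ^ d := by positivity
    ext i
    · simp only []
      rw [add_comm, Int.add_mul_ediv_left _ _ (by positivity : (2:ℤ)^d ≠ 0)]
      have : ((qs.2 i : ℤ)) / (2 ^ d : ℤ) = 0 := by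
        apply Int.ediv_eq_zero_of_lt (by positivity)
        exact_mod_cast (qs.2 i).2
      omega
    · simp only []
      have h2 : ((2 ^ d : ℤ) * qs.1 i + (qs.2 i : ℤ)) % (2 ^ d : ℤ) = (qs.2 i : ℤ) := by
        rw [add_comm, Int.add_mul_emod_self_left]
        apply Int.emod_eq_of_lt (by positivity)
        exact_mod_cast (qs.2 i).2
      rw [h2]
      simp

lemma tsum_div_pow {n : ℕ} (d : ℕ) (F : (Fin n → ℤ) → ℝ≥0∞) :
    ∑' m : Fin n → ℤ, F (fun i => m i / (2 ^ d : ℤ))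
      = (2 ^ (d * n) : ℕ) * ∑' m' : Fin n → ℤ, F m' := by
  have h := (divModEquiv n d).tsum_eq (fun z : (Fin n → ℤ) × (Fin n → Fin (2 ^ d)) => F z.1)
  have hl : ∑' m : Fin n → ℤ, F (fun i => m i / (2 ^ d : ℤ))
      = ∑' z : (Fin n → ℤ) × (Fin n → Fin (2 ^ d)), F z.1 := by
    rw [← h]
    rfl
  rw [hl, ENNReal.tsum_prod']
  have : ∀ q : Fin n → ℤ, (∑' _ : Fin n → Fin (2 ^ d), F q) = (2 ^ (d * n) : ℕ) * F q := by
    intro q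
    rw [tsum_fintype, Finset.sum_const, Finset.card_univ]
    have hc : ((2:ℕ)^d)^n = 2^(d*n) := (pow_mul 2 d n).symm
    simp [Fintype.card_fun, nsmul_eq_mul, hc]
  rw [tsum_congr this, ENNReal.tsum_mul_left]

def natIciEquiv (k : ℤ) : ℕ ≃ (Set.Ici k) where
  toFun d := ⟨k + d, by simp⟩
  invFun j := (j.1 - k).toNat
  left_inv d := by simp
  right_inv j := by
    have := j.2
    simp only [Set.mem_Ici] at this
    ext
    simp only []
    omega

lemma tsum_int_ge (k : ℤ) (g : ℤ → ℝ≥0∞) (h0 : ∀ j, j < k → g j = 0) :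
    ∑' j : ℤ, g j = ∑' d : ℕ, g (k + d) := by
  have hsupp : Function.support g ⊆ Set.Ici k := by
    intro j hj
    simp only [Set.mem_Ici]
    by_contra h
    exact hj (h0 j (by omega))
  rw [← tsum_subtype_eq_of_support_subset hsupp, ← (natIciEquiv k).tsum_eq (fun j => g j.1)]
  rfl

lemma termA {n : ℕ} {X : Type*} [NormedAddCommGroup X] [NormedSpace ℝ X]
    {k j : ℤ} (hjk : j ≤ k) (m : Fin n → ℤ) {g : (Fin n → ℝ) → X}
    (hg : StronglyMeasurable g) {p : ℝ} (hp : 1 ≤ p) :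
    (∫⁻ x in dyadicCube n j m, (‖Ek' n k g x‖₊ : ℝ≥0∞) ^ p)
      ≤ ∫⁻ x in dyadicCube n j m, (‖g x‖₊ : ℝ≥0∞) ^ p := by
  have hF : Measurable fun y => (‖g y‖₊ : ℝ≥0∞) ^ p := hg.enorm.pow_const p
  calc (∫⁻ x in dyadicCube n j m, (‖Ek' n k g x‖₊ : ℝ≥0∞) ^ p)
      ≤ ∫⁻ x in dyadicCube n j m,
          (cubeVol n k)⁻¹ * ∫⁻ y in dyadicCube n k (fun i => ⌊(2:ℝ) ^ (k:ℝ) * x i⌋),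
            (‖g y‖₊ : ℝ≥0∞) ^ p :=
        lintegral_mono fun x => Ek'_pointwise hg.aestronglyMeasurable hp x
    _ ≤ _ := caseA hjk m hF

lemma two_rpow_shuffle (I : ℝ≥0∞) (x y z w v s : ℝ) (hs : 0 ≤ s)
    (h : x + (y + z) * s = w + v) :
    (2:ℝ≥0∞) ^ x * ((2:ℝ≥0∞) ^ y * ((2:ℝ≥0∞) ^ z * I)) ^ s
      = (2:ℝ≥0∞) ^ w * ((2:ℝ≥0∞) ^ v * I ^ s) := by
  rw [ENNReal.mul_rpow_of_nonneg _ _ hs, ENNReal.mul_rpow_of_nonneg _ _ hs,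
    ← ENNReal.rpow_mul, ← ENNReal.rpow_mul, ← mul_assoc, ← mul_assoc, ← two_rpow_add,
    ← two_rpow_add, ← mul_assoc, ← two_rpow_add]
  congr 2
  linear_combination h

lemma termB {n : ℕ} {X : Type*} [NormedAddCommGroup X] [NormedSpace ℝ X]
    {k j : ℤ} (hkj : k ≤ j) (m : Fin n → ℤ) {g : (Fin n → ℝ) → X}
    (hg : StronglyMeasurable g) {p t : ℝ} (hp : 1 ≤ p) (ht : 0 < t) :
    cubeVol n j ^ (1/t - 1/p) * (∫⁻ x in dyadicCube n j m, (‖Ek' n k g x‖₊ : ℝ≥0∞) ^ p) ^ (1/p)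
      ≤ (2:ℝ≥0∞) ^ (-(((j - k).toNat : ℝ) * n) / t) *
        (cubeVol n k ^ (1/t - 1/p) *
          (∫⁻ x in dyadicCube n k (fun i => m i / (2 ^ (j - k).toNat : ℤ)),
            (‖g x‖₊ : ℝ≥0∞) ^ p) ^ (1/p)) := by
  have hp0 : (0:ℝ) < p := by linarith
  have hdr : (((j - k).toNat : ℕ) : ℝ) = (j : ℝ) - (k : ℝ) := by
    have h5 : (((j - k).toNat : ℤ) : ℝ) = ((j - k : ℤ) : ℝ) := by
      rw [Int.toNat_of_nonneg (by omega)]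
    push_cast at h5 ⊢
    linarith
  have hstep : (∫⁻ x in dyadicCube n j m, (‖Ek' n k g x‖₊ : ℝ≥0∞) ^ p)
      ≤ cubeVol n j * ((cubeVol n k)⁻¹ *
          ∫⁻ x in dyadicCube n k (fun i => m i / (2 ^ (j - k).toNat : ℤ)),
            (‖g x‖₊ : ℝ≥0∞) ^ p) := by
    calc (∫⁻ x in dyadicCube n j m, (‖Ek' n k g x‖₊ : ℝ≥0∞) ^ p)
        ≤ ∫⁻ _x in dyadicCube n j m, ((cubeVol n k)⁻¹ *
            ∫⁻ y in dyadicCube n k (fun i => m i / (2 ^ (j - k).toNat : ℤ)),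
              (‖g y‖₊ : ℝ≥0∞) ^ p) := by
          apply setLIntegral_mono measurable_const
          intro x hx
          have h1 := Ek'_pointwise (k := k) hg.aestronglyMeasurable hp x
          rwa [floor_const_on_cube hkj hx] at h1
      _ = _ * volume (dyadicCube n j m) := setLIntegral_const _ _
      _ = _ := by rw [volume_dyadicCube, mul_comm]
  calc cubeVol n j ^ (1/t - 1/p) * (∫⁻ x in dyadicCube n j m, (‖Ek' n k g x‖₊ : ℝ≥0∞) ^ p) ^ (1/p)
      ≤ cubeVol n j ^ (1/t - 1/p) * (cubeVol n j * ((cubeVol n k)⁻¹ *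
          ∫⁻ x in dyadicCube n k (fun i => m i / (2 ^ (j - k).toNat : ℤ)),
            (‖g x‖₊ : ℝ≥0∞) ^ p)) ^ (1/p) :=
        mul_le_mul_right (ENNReal.rpow_le_rpow hstep (by positivity)) _
    _ = _ := by
        rw [cubeVol_rpow, cubeVol_inv, cubeVol_rpow n k,
          show cubeVol n j = (2:ℝ≥0∞) ^ (-((j:ℝ) * n)) from rfl]
        apply two_rpow_shuffle _ _ _ _ _ _ _ (by positivity)
        rw [hdr]
        field_simp
        ring

lemma core (n : ℕ) {X : Type*} [NormedAddCommGroup X] [NormedSpace ℝ X]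
    {t r p : ℝ} (ht : 1 < t) (htr : t < r) (hp1 : 1 ≤ p) (hpt : p < t) (k : ℤ)
    {g : (Fin n → ℝ) → X} (hg : StronglyMeasurable g) :
    BMnorm n p t (ENNReal.ofReal r) (Ek' n k g) ≤
      ((1 + (1 - (2:ℝ≥0∞) ^ ((n:ℝ) * (1 - r/t)))⁻¹) ^ (1/r)) *
        BMnorm n p t (ENNReal.ofReal r) g := by
  have hr0 : (0:ℝ) < r := by linarith
  have ht0 : (0:ℝ) < t := by linarith
  have hp0 : (0:ℝ) < p := by linarith
  have hrne : (ENNReal.ofReal r) ≠ ∞ := ENNReal.ofReal_ne_top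
  have htor : (ENNReal.ofReal r).toReal = r := ENNReal.toReal_ofReal hr0.le
  set T : ℤ × (Fin n → ℤ) → ℝ≥0∞ := fun jm =>
    cubeVol n jm.1 ^ (1/t - 1/p) *
      (∫⁻ x in dyadicCube n jm.1 jm.2, (‖g x‖₊ : ℝ≥0∞) ^ p) ^ (1/p) with hT
  set TE : ℤ × (Fin n → ℤ) → ℝ≥0∞ := fun jm =>
    cubeVol n jm.1 ^ (1/t - 1/p) *
      (∫⁻ x in dyadicCube n jm.1 jm.2, (‖Ek' n k g x‖₊ : ℝ≥0∞) ^ p) ^ (1/p) with hTE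
  have hBMg : BMnorm n p t (ENNReal.ofReal r) g = (∑' jm, T jm ^ r) ^ (1/r) := by
    rw [BMnorm, lrNorm, if_neg hrne, htor]
  have hBME : BMnorm n p t (ENNReal.ofReal r) (Ek' n k g) = (∑' jm, TE jm ^ r) ^ (1/r) := by
    rw [BMnorm, lrNorm, if_neg hrne, htor]
  set S : ℝ≥0∞ := ∑' jm, T jm ^ r with hS
  set qn : ℝ≥0∞ := (2:ℝ≥0∞) ^ ((n:ℝ) * (1 - r/t)) with hqn
  set K : ℝ≥0∞ := 1 + (1 - qn)⁻¹ with hK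
  -- the pointwise bound function
  set w : ℤ × (Fin n → ℤ) → ℝ≥0∞ := fun jm =>
    if jm.1 < k then T jm ^ r
    else (2:ℝ≥0∞) ^ (-(((jm.1 - k).toNat : ℝ) * n) / t * r) *
      T (k, fun i => jm.2 i / (2 ^ (jm.1 - k).toNat : ℤ)) ^ r with hw
  have hpoint : ∀ jm, TE jm ^ r ≤ w jm := by
    rintro ⟨j, m⟩
    by_cases hj : j < k
    · simp only [hw, if_pos hj]
      apply ENNReal.rpow_le_rpow _ hr0.le
      exact mul_le_mul_right
        (ENNReal.rpow_le_rpow (termA hj.le m hg hp1) (by positivity)) _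
    · simp only [hw, if_neg hj]
      have hb := termB (not_lt.mp hj) m hg hp1 ht0
      calc TE (j, m) ^ r
          ≤ ((2:ℝ≥0∞) ^ (-(((j - k).toNat : ℝ) * n) / t) *
              T (k, fun i => m i / (2 ^ (j - k).toNat : ℤ))) ^ r :=
            ENNReal.rpow_le_rpow hb hr0.le
        _ = _ := by
            rw [ENNReal.mul_rpow_of_nonneg _ _ hr0.le, ← ENNReal.rpow_mul]
  have hmain : (∑' jm, TE jm ^ r) ≤ K * S := by
    have hperj : ∀ j : ℤ, (∑' m : Fin n → ℤ, w (j, m)) ≤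
        (if j < k then ∑' m : Fin n → ℤ, T (j, m) ^ r else 0) +
        (if k ≤ j then qn ^ ((j - k).toNat) * S else 0) := by
      intro j
      by_cases hj : j < k
      · simp only [hw, if_pos hj, if_neg (by omega : ¬ k ≤ j), add_zero]
        exact le_rfl
      · have hkj : k ≤ j := not_lt.mp hj
        simp only [hw, if_neg hj, if_pos hkj, zero_add]
        set d : ℕ := (j - k).toNat with hd
        rw [ENNReal.tsum_mul_left, tsum_div_pow d (fun m' => T (k, m') ^ r)]
        have hsub : (∑' m' : Fin n → ℤ, T (k, m') ^ r) ≤ S := by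
          have hinj : Function.Injective (fun m' : Fin n → ℤ => ((k, m') : ℤ × (Fin n → ℤ))) :=
            fun a b h => by simpa using h
          exact tsum_comp_le_tsum_of_injective hinj (fun jm => T jm ^ r)
        have hfac : (2:ℝ≥0∞) ^ (-((d : ℝ) * n) / t * r) * ((2 ^ (d * n) : ℕ) : ℝ≥0∞) = qn ^ d := by
          have h1 : ((2 ^ (d * n) : ℕ) : ℝ≥0∞) = (2:ℝ≥0∞) ^ (((d * n : ℕ)) : ℝ) := by
            rw [ENNReal.rpow_natCast]
            push_cast
            ring
          have h2 : qn ^ d = (2:ℝ≥0∞) ^ (((n:ℝ) * (1 - r/t)) * (d : ℝ)) := by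
            rw [hqn, ← ENNReal.rpow_natCast ((2:ℝ≥0∞) ^ ((n:ℝ) * (1 - r/t))) d, ← ENNReal.rpow_mul]
          rw [h1, h2, ← two_rpow_add]
          congr 1
          push_cast
          field_simp
          ring
        calc (2:ℝ≥0∞) ^ (-((d : ℝ) * n) / t * r) *
              (((2 ^ (d * n) : ℕ) : ℝ≥0∞) * ∑' m' : Fin n → ℤ, T (k, m') ^ r)
            ≤ (2:ℝ≥0∞) ^ (-((d : ℝ) * n) / t * r) * (((2 ^ (d * n) : ℕ) : ℝ≥0∞) * S) :=
              mul_le_mul_right (mul_le_mul_right hsub _) _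
          _ = qn ^ d * S := by rw [← mul_assoc, hfac]
    have hbound1 : (∑' j : ℤ, if j < k then ∑' m : Fin n → ℤ, T (j, m) ^ r else 0) ≤ S := by
      calc (∑' j : ℤ, if j < k then ∑' m : Fin n → ℤ, T (j, m) ^ r else 0)
          ≤ ∑' j : ℤ, ∑' m : Fin n → ℤ, T (j, m) ^ r := by
            apply ENNReal.tsum_le_tsum
            intro j
            split_ifs
            · exact le_rfl
            · exact zero_le
        _ = S := by rw [hS, ENNReal.tsum_prod']
    have hbound2 : (∑' j : ℤ, if k ≤ j then qn ^ ((j - k).toNat) * S else 0)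
        = (1 - qn)⁻¹ * S := by
      rw [tsum_int_ge k _ (fun j hj => if_neg (by omega))]
      have : ∀ d : ℕ, (if k ≤ k + d then qn ^ ((k + d - k).toNat) * S else 0) = qn ^ d * S := by
        intro d
        rw [if_pos (by omega)]
        congr 2
        omega
      rw [tsum_congr this, ENNReal.tsum_mul_right, ENNReal.tsum_geometric]
    calc (∑' jm, TE jm ^ r) ≤ ∑' jm, w jm := ENNReal.tsum_le_tsum hpoint
      _ = ∑' j : ℤ, ∑' m : Fin n → ℤ, w (j, m) := ENNReal.tsum_prod'
      _ ≤ ∑' j : ℤ, ((if j < k then ∑' m : Fin n → ℤ, T (j, m) ^ r else 0) +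
            (if k ≤ j then qn ^ ((j - k).toNat) * S else 0)) := ENNReal.tsum_le_tsum hperj
      _ = (∑' j : ℤ, if j < k then ∑' m : Fin n → ℤ, T (j, m) ^ r else 0) +
            (∑' j : ℤ, if k ≤ j then qn ^ ((j - k).toNat) * S else 0) := ENNReal.tsum_add
      _ ≤ S + (1 - qn)⁻¹ * S := by rw [hbound2]; exact add_le_add_left hbound1 _
      _ = K * S := by rw [hK, add_mul, one_mul]
  rw [hBME, hBMg]
  calc (∑' jm, TE jm ^ r) ^ (1/r) ≤ (K * S) ^ (1/r) :=
        ENNReal.rpow_le_rpow hmain (by positivity)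
    _ = K ^ (1/r) * S ^ (1/r) := ENNReal.mul_rpow_of_nonneg _ _ (by positivity)

theorem Ek_bounded_on_BM (n : ℕ) (t r : ℝ)
    {X : Type*} [NormedAddCommGroup X] [NormedSpace ℝ X] [CompleteSpace X]
    (htr : t < r) (ht : 1 < t) :
    ∃ C : ℝ≥0∞, 0 < C ∧ C < ∞ ∧
      ∀ p : ℝ, 1 ≤ p → p < t → ∀ k : ℤ, ∀ f : (Fin n → ℝ) → X,
        MemBM n p t (ENNReal.ofReal r) f →
          BMnorm n p t (ENNReal.ofReal r) (Ek n k f) ≤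
            C * BMnorm n p t (ENNReal.ofReal r) f := by
  have ht0 : (0:ℝ) < t := by linarith
  have hr0 : (0:ℝ) < r := by linarith
  set em : ℝ := ((max 1 n : ℕ) : ℝ) * (1 - r/t) with hem
  have hemneg : em < 0 := by
    have h1 : (1:ℝ) ≤ ((max 1 n : ℕ) : ℝ) := by
      have : 1 ≤ max 1 n := le_max_left 1 n
      exact_mod_cast this
    have h2 : (1:ℝ) < r / t := by
      rw [lt_div_iff₀ ht0]
      linarith
    have : 1 - r/t < 0 := by linarith
    calc em = ((max 1 n : ℕ) : ℝ) * (1 - r/t) := rfl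
      _ < 0 := mul_neg_of_pos_of_neg (by linarith) this
  set q : ℝ≥0∞ := (2:ℝ≥0∞) ^ em with hq
  have hqlt : q < 1 := ENNReal.rpow_lt_one_of_one_lt_of_neg (by norm_num) hemneg
  set K : ℝ≥0∞ := 1 + (1 - q)⁻¹ with hK
  have hKne : K ≠ ∞ := by
    rw [hK]
    have : (1 - q)⁻¹ < ∞ := ENNReal.inv_lt_top.mpr (tsub_pos_iff_lt.mpr hqlt)
    simp [this.ne]
  have hKpos : 0 < K := by
    rw [hK]
    exact lt_of_lt_of_le one_pos le_self_add
  refine ⟨K ^ (1/r), ENNReal.rpow_pos hKpos hKne, ENNReal.rpow_lt_top_of_nonneg (by positivity) hKne, ?_⟩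
  intro p hp1 hpt k f hf
  have hp0 : (0:ℝ) < p := by linarith
  rcases Nat.eq_zero_or_pos n with hn0 | hn1
  · -- n = 0 : f is a.e. zero, so Ek f = 0
    subst hn0
    have huniv : ∀ (j : ℤ) (m : Fin 0 → ℤ), dyadicCube 0 j m = Set.univ := by
      intro j m
      ext x
      simp only [dyadicCube, Set.mem_setOf_eq, Set.mem_univ, iff_true]
      exact fun i => i.elim0
    have hcv : ∀ j : ℤ, cubeVol 0 j = 1 := by
      intro j
      simp [cubeVol]
    set I0 : ℝ≥0∞ := ∫⁻ x, (‖f x‖₊ : ℝ≥0∞) ^ p with hI0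
    have hrne : (ENNReal.ofReal r) ≠ ∞ := ENNReal.ofReal_ne_top
    have htor : (ENNReal.ofReal r).toReal = r := ENNReal.toReal_ofReal hr0.le
    have hterm : ∀ jm : ℤ × (Fin 0 → ℤ),
        cubeVol 0 jm.1 ^ (1/t - 1/p) *
          (∫⁻ x in dyadicCube 0 jm.1 jm.2, (‖f x‖₊ : ℝ≥0∞) ^ p) ^ (1/p) = I0 ^ (1/p) := by
      intro jm
      rw [hcv, huniv, Measure.restrict_univ, ENNReal.one_rpow, one_mul]
    have hfin := hf.2
    rw [BMnorm, lrNorm, if_neg hrne, htor] at hfin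
    rw [tsum_congr (fun jm => by rw [hterm jm])] at hfin
    have hI00 : I0 = 0 := by
      by_contra hne
      have hc : (I0 ^ (1/p)) ^ r ≠ 0 := by
        rw [← ENNReal.rpow_mul]
        intro h
        rcases ENNReal.rpow_eq_zero_iff.mp h with ⟨h1, _⟩ | ⟨_, h2⟩
        · exact hne h1
        · have : (0:ℝ) < 1/p * r := by positivity
          linarith
      rw [ENNReal.tsum_const_eq_top_of_ne_zero hc] at hfin
      rw [ENNReal.top_rpow_of_pos (by positivity)] at hfin
      exact (lt_irrefl _ hfin).elim
    have h1 : ∀ᵐ x ∂(volume : Measure (Fin 0 → ℝ)), (‖f x‖₊ : ℝ≥0∞) ^ p = 0 := by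
      have h2 := (lintegral_eq_zero_iff' (f := fun x => (‖f x‖₊ : ℝ≥0∞) ^ p) ((hf.1.enorm).pow_const p)).mp
        (by rw [← hI0]; exact hI00)
      filter_upwards [h2] with x hx
      exact hx
    have hfae : f =ᵐ[(volume : Measure (Fin 0 → ℝ))] 0 := by
      filter_upwards [h1] with x hx
      have h3 : (‖f x‖₊ : ℝ≥0∞) = 0 := by
        rcases ENNReal.rpow_eq_zero_iff.mp hx with ⟨h4, _⟩ | ⟨h4, _⟩
        · exact h4
        · exact absurd h4 ENNReal.coe_ne_top
      simp only [Pi.zero_apply]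
      have : ‖f x‖₊ = 0 := by exact_mod_cast h3
      simpa using this
    have hEk0 : ∀ x, Ek 0 k f x = 0 := by
      intro x
      rw [Ek]
      have hz : (∫ y in dyadicCube 0 k fun i => ⌊(2:ℝ) ^ (k:ℝ) * x i⌋, f y) = 0 := by
        rw [huniv, Measure.restrict_univ]
        exact integral_eq_zero_of_ae hfae
      rw [hz, smul_zero]
    have hzero : BMnorm 0 p t (ENNReal.ofReal r) (Ek 0 k f) = 0 := by
      rw [BMnorm, lrNorm, if_neg hrne, htor]
      have hterm0 : ∀ jm : ℤ × (Fin 0 → ℤ),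
          (cubeVol 0 jm.1 ^ (1/t - 1/p) *
            (∫⁻ x in dyadicCube 0 jm.1 jm.2, (‖Ek 0 k f x‖₊ : ℝ≥0∞) ^ p) ^ (1/p)) ^ r = 0 := by
        intro jm
        have hz : (fun x => (‖Ek 0 k f x‖₊ : ℝ≥0∞) ^ p) = fun _ => (0:ℝ≥0∞) := by
          funext x
          rw [hEk0 x]
          simp [ENNReal.zero_rpow_of_pos hp0]
        rw [hz, lintegral_zero, ENNReal.zero_rpow_of_pos (by positivity : (0:ℝ) < 1/p),
          mul_zero, ENNReal.zero_rpow_of_pos hr0]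
      rw [tsum_congr hterm0, tsum_zero, ENNReal.zero_rpow_of_pos (by positivity : (0:ℝ) < 1/r)]
    rw [hzero]
    exact zero_le
  · -- n ≥ 1
    have hmax : ((max 1 n : ℕ) : ℝ) = (n : ℝ) := by
      have : max 1 n = n := max_eq_right hn1
      exact_mod_cast congrArg (fun x : ℕ => (x : ℝ)) this
    have hqeq : q = (2:ℝ≥0∞) ^ ((n:ℝ) * (1 - r/t)) := by rw [hq, hem, hmax]
    set g := hf.1.mk f with hgdef
    have hgm : StronglyMeasurable g := hf.1.stronglyMeasurable_mk
    have hfg : f =ᵐ[volume] g := hf.1.ae_eq_mk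
    have hEkeq : Ek n k f = Ek' n k g := by
      funext x
      rw [Ek, Ek']
      congr 1
      exact integral_congr_ae (ae_restrict_of_ae hfg)
    have hBMeq : BMnorm n p t (ENNReal.ofReal r) f = BMnorm n p t (ENNReal.ofReal r) g := by
      rw [BMnorm, BMnorm]
      congr 1
      funext jm
      congr 2
      apply lintegral_congr_ae
      apply ae_restrict_of_ae
      filter_upwards [hfg] with x hx
      rw [hx]
    rw [hEkeq, hBMeq]
    have hcore := core n (X := X) ht htr hp1 hpt k hgm
    rwa [← hqeq] at hcore

end
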